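/- If B is a fully invariant subact of an S-act A (i.e., f(B) ⊆ B for every endomorphism f of A), and both B and the Rees quotient A/B are strongly Hopfian, then A is strongly Hopfian. -/
import Mathlib


structure RAct (S : Type*) [Monoid S] (A : Type*) where
  act : A → S → A
  act_one : ∀ a, act a 1 = a
  act_mul : ∀ a s t, act a (s * t) = act (act a s) t

variable {S : Type*} [Monoid S] {A B : Type*}

/-- `f` is an S-act homomorphism from `M` to `N`. -/
def IsHom (M : RAct S A) (N : RAct S B) (f : A → B) : Prop :=
  ∀ a s, f (M.act a s) = N.act (f a) s

/-- `f` is an S-act endomorphism of `M`. -/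
def IsEnd (M : RAct S A) (f : A → A) : Prop := IsHom M M f

/-- `r` is a congruence on the S-act `M`. -/
def IsCong (M : RAct S A) (r : A → A → Prop) : Prop :=
  Equivalence r ∧ ∀ a b s, r a b → r (M.act a s) (M.act b s)

/-- The kernel congruence `K_f`. -/
def kerC {A : Type*} (f : A → A) : A → A → Prop := fun a b => f a = f b

/-- The image congruence `I_f = (im f × im f) ∪ Δ`. -/
def imC {A : Type*} (f : A → A) : A → A → Prop :=
  fun a b => a = b ∨ (a ∈ Set.range f ∧ b ∈ Set.range f)

/-- The diagonal relation. -/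
def diagR (A : Type*) : A → A → Prop := fun a b => a = b

/-- The full relation. -/
def fullR (A : Type*) : A → A → Prop := fun _ _ => True

/-- `M` is strongly Hopfian: the chain `K_f ⊆ K_{f²} ⊆ ⋯` stabilizes for every endomorphism. -/
def StronglyHopfian (M : RAct S A) : Prop :=
  ∀ f : A → A, IsEnd M f → ∃ n : ℕ, 1 ≤ n ∧ ∀ m, n ≤ m → kerC (f^[m]) = kerC (f^[n])

/-- `M` is strongly co-Hopfian: the chain `I_f ⊇ I_{f²} ⊇ ⋯` stabilizes for every endomorphism. -/
def StronglyCoHopfian (M : RAct S A) : Prop :=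
  ∀ f : A → A, IsEnd M f → ∃ n : ℕ, 1 ≤ n ∧ ∀ m, n ≤ m → imC (f^[m]) = imC (f^[n])

/-- `M` is Hopfian: every surjective endomorphism is injective. -/
def Hopfian (M : RAct S A) : Prop :=
  ∀ f : A → A, IsEnd M f → Function.Surjective f → Function.Injective f

/-- `M` is co-Hopfian: every injective endomorphism is surjective. -/
def CoHopfian (M : RAct S A) : Prop :=
  ∀ f : A → A, IsEnd M f → Function.Injective f → Function.Surjective f

/-- ACC on congruences. -/
def NoetherianAct (M : RAct S A) : Prop :=
  ∀ c : ℕ → (A → A → Prop), (∀ n, IsCong M (c n)) →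
    (∀ n a b, c n a b → c (n + 1) a b) → ∃ N, ∀ m, N ≤ m → c m = c N

/-- DCC on congruences. -/
def ArtinianAct (M : RAct S A) : Prop :=
  ∀ c : ℕ → (A → A → Prop), (∀ n, IsCong M (c n)) →
    (∀ n a b, c (n + 1) a b → c n a b) → ∃ N, ∀ m, N ≤ m → c m = c N

/-- The monoid `S` as a right act over itself. -/
def mulAct (S : Type*) [Monoid S] : RAct S S :=
  ⟨fun x s => x * s, mul_one, fun a s t => (mul_assoc a s t).symm⟩
/-- The Rees relation of a subset `Bs`. -/
def reesRel {A : Type*} (Bs : Set A) : A → A → Prop :=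
  fun a b => a = b ∨ (a ∈ Bs ∧ b ∈ Bs)

/-- The Rees relation is an equivalence. -/
def reesSetoid {A : Type*} (Bs : Set A) : Setoid A where
  r := reesRel Bs
  iseqv := by
    constructor
    · intro a; exact Or.inl rfl
    · intro a b h
      rcases h with e | h
      · exact Or.inl e.symm
      · exact Or.inr ⟨h.2, h.1⟩
    · intro a b c h1 h2
      rcases h1 with e | h1
      · rw [e]; exact h2
      · rcases h2 with e | h2
        · exact Or.inr ⟨h1.1, e ▸ h1.2⟩
        · exact Or.inr ⟨h1.1, h2.2⟩

/-- A subact `Bs` of `M` as an S-act in its own right. -/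
def subAct (M : RAct S A) (Bs : Set A) (hB : ∀ b ∈ Bs, ∀ s : S, M.act b s ∈ Bs) :
    RAct S Bs where
  act := fun b s => ⟨M.act b.1 s, hB b.1 b.2 s⟩
  act_one := fun b => Subtype.ext (M.act_one b.1)
  act_mul := fun b s t => Subtype.ext (M.act_mul b.1 s t)

/-- The Rees quotient act `A/B`. -/
def reesQuotAct (M : RAct S A) (Bs : Set A) (hB : ∀ b ∈ Bs, ∀ s : S, M.act b s ∈ Bs) :
    RAct S (Quotient (reesSetoid Bs)) where
  act := fun q s => Quotient.map' (fun a => M.act a s)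
    (fun a b h => by
      rcases h with e | h
      · exact Or.inl (by rw [e])
      · exact Or.inr ⟨hB a h.1 s, hB b h.2 s⟩) q
  act_one := by
    intro q
    induction q using Quotient.inductionOn'
    exact congrArg (Quotient.mk'' ·) (M.act_one _)
  act_mul := by
    intro q s t
    induction q using Quotient.inductionOn'
    exact congrArg (Quotient.mk'' ·) (M.act_mul _ s t)

/-- If `B` is a fully invariant subact of `A` and both `B` and the Rees quotient `A/B` are
strongly Hopfian, then so is `A`. -/
theorem stmt17 (M : RAct S A) (Bs : Set A)
    (hsub : ∀ b ∈ Bs, ∀ s : S, M.act b s ∈ Bs)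
    (hfi : ∀ f : A → A, IsEnd M f → ∀ b ∈ Bs, f b ∈ Bs)
    (hBH : StronglyHopfian (subAct M Bs hsub))
    (hQH : StronglyHopfian (reesQuotAct M Bs hsub)) :
    StronglyHopfian M := by
  intro f hf
  -- restriction of f to Bs
  let g : Bs → Bs := fun b => ⟨f b.1, hfi f hf b.1 b.2⟩
  have hgend : IsEnd (subAct M Bs hsub) g := fun a s => Subtype.ext (hf a.1 s)
  have hgiter : ∀ (k : ℕ) (b : Bs), (g^[k] b).1 = f^[k] b.1 := by
    intro k
    induction k with
    | zero => intro b; simp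
    | succ k ih =>
        intro b
        rw [Function.iterate_succ_apply, Function.iterate_succ_apply]
        exact ih (g b)
  -- induced map on the Rees quotient
  let fq : Quotient (reesSetoid Bs) → Quotient (reesSetoid Bs) :=
    Quotient.map' f (fun a b h => by
      rcases h with e | h
      · exact Or.inl (congrArg f e)
      · exact Or.inr ⟨hfi f hf a h.1, hfi f hf b h.2⟩)
  have hfqend : IsEnd (reesQuotAct M Bs hsub) fq := by
    intro q s
    induction q using Quotient.inductionOn'
    exact congrArg Quotient.mk'' (hf _ s)
  have hfqiter : ∀ (k : ℕ) (a : A),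
      fq^[k] (Quotient.mk'' a) = Quotient.mk'' (f^[k] a) := by
    intro k
    induction k with
    | zero => intro a; simp
    | succ k ih =>
        intro a
        rw [Function.iterate_succ_apply, Function.iterate_succ_apply]
        exact ih (f a)
  obtain ⟨n₁, hn₁1, hn₁⟩ := hBH g hgend
  obtain ⟨n₂, hn₂1, hn₂⟩ := hQH fq hfqend
  refine ⟨n₁ + n₂, by omega, ?_⟩
  intro m hm
  funext a b
  apply propext
  constructor
  · intro h
    have hab : f^[m] a = f^[m] b := h
    have hq : kerC (fq^[n₂]) (Quotient.mk'' a) (Quotient.mk'' b) := by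
      rw [← hn₂ m (by omega)]
      show fq^[m] _ = fq^[m] _
      rw [hfqiter, hfqiter, hab]
    have hq' : (Quotient.mk'' (f^[n₂] a) : Quotient (reesSetoid Bs)) = Quotient.mk'' (f^[n₂] b) := by
      have : fq^[n₂] (Quotient.mk'' a) = fq^[n₂] (Quotient.mk'' b) := hq
      rwa [hfqiter, hfqiter] at this
    have hrees : reesRel Bs (f^[n₂] a) (f^[n₂] b) := Quotient.exact' hq'
    rcases hrees with e | ⟨ha, hb⟩
    · show f^[n₁ + n₂] a = f^[n₁ + n₂] b
      rw [Function.iterate_add_apply, Function.iterate_add_apply, e]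
    · set x : Bs := ⟨f^[n₂] a, ha⟩
      set y : Bs := ⟨f^[n₂] b, hb⟩
      have hk : kerC (g^[m - n₂]) x y := by
        show g^[m - n₂] x = g^[m - n₂] y
        apply Subtype.ext
        rw [hgiter, hgiter]
        show f^[m - n₂] (f^[n₂] a) = f^[m - n₂] (f^[n₂] b)
        rw [← Function.iterate_add_apply, ← Function.iterate_add_apply]
        have hmn : m - n₂ + n₂ = m := by omega
        rw [hmn]; exact hab
      have hk' : kerC (g^[n₁]) x y := by
        rw [← hn₁ (m - n₂) (by omega)]; exact hk
      have hxy : g^[n₁] x = g^[n₁] y := hk'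
      have hval : f^[n₁] (f^[n₂] a) = f^[n₁] (f^[n₂] b) := by
        have := congrArg Subtype.val hxy
        rwa [hgiter, hgiter] at this
      show f^[n₁ + n₂] a = f^[n₁ + n₂] b
      rw [Function.iterate_add_apply, Function.iterate_add_apply]
      exact hval
  · intro h
    have hab : f^[n₁ + n₂] a = f^[n₁ + n₂] b := h
    show f^[m] a = f^[m] b
    have hmn : m = (m - (n₁ + n₂)) + (n₁ + n₂) := by omega
    rw [hmn, Function.iterate_add_apply f (m - (n₁ + n₂)) (n₁ + n₂) a,
      Function.iterate_add_apply f (m - (n₁ + n₂)) (n₁ + n₂) b, hab]
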